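/- In a bipartite hourglass of height h ≥ 5 with the corner cross edges present, the shifted matching is exchange-stable: let H be an hourglass of height h ≥ 5 with vertices u_0,...,u_{h-1}, w_0,...,w_{h-1} and additional edges {u_0, w_{h-1}} and {u_{h-1}, w_0} (so H is bipartite and every vertex has degree three). Then the matching M = {{u_{(i-1) mod h}, w_i} : 0 ≤ i ≤ h-1} is a perfect matching of H, and M admits no exchange-blocking pair within H under any strict preferences each agent has over its (at most three) neighbors. -/
import Mathlib


/-- The vertex set of an hourglass with layers `(u i, w i)`, `i < h`. -/
def hgSet {V : Type*} (h : ℕ) (u w : ℕ → V) : Set V :=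
  {v | ∃ i < h, v = u i ∨ v = w i}

/-- `IsHourglass G h u w`: the vertices `u 0, w 0, …, u (h-1), w (h-1)` induce an
hourglass of height `h` in `G`: consecutive layers are completely cross-linked,
each layer is linked horizontally, and middle-layer vertices have exactly these
three neighbours inside the hourglass (corner vertices have degree at least two
inside, which is implied). -/
def IsHourglass {V : Type*} (G : SimpleGraph V) (h : ℕ) (u w : ℕ → V) : Prop :=
  2 ≤ h ∧
  Set.InjOn u (Set.Iio h) ∧ Set.InjOn w (Set.Iio h) ∧
  (∀ i < h, ∀ j < h, u i ≠ w j) ∧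
  (∀ i < h, G.Adj (u i) (w i)) ∧
  (∀ i, i + 1 < h → G.Adj (u i) (w (i + 1)) ∧ G.Adj (u (i + 1)) (w i)) ∧
  (∀ i, 1 ≤ i → i + 1 < h →
    (∀ j < h, G.Adj (u i) (w j) → j + 1 = i ∨ j = i ∨ j = i + 1) ∧
    (∀ j < h, ¬ G.Adj (u i) (u j)) ∧
    (∀ j < h, G.Adj (w i) (u j) → j + 1 = i ∨ j = i ∨ j = i + 1) ∧
    (∀ j < h, ¬ G.Adj (w i) (w j)))

/-- A maximal hourglass: no strictly larger vertex set induces an hourglass. -/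
def IsMaxHourglass {V : Type*} (G : SimpleGraph V) (h : ℕ) (u w : ℕ → V) : Prop :=
  IsHourglass G h u w ∧
    ¬ ∃ (h' : ℕ) (u' w' : ℕ → V), IsHourglass G h' u' w' ∧
        hgSet h u w ⊂ hgSet h' u' w'

private lemma three_nbrs {V : Type*} [Fintype V] (G : SimpleGraph V) [DecidableRel G.Adj]
    {v a b c x : V} (hdeg : G.degree v ≤ 3)
    (ha : G.Adj v a) (hb : G.Adj v b) (hc : G.Adj v c)
    (hab : a ≠ b) (hac : a ≠ c) (hbc : b ≠ c)
    (hx : G.Adj v x) : x = a ∨ x = b ∨ x = c := by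
  classical
  have hsub : ({a, b, c} : Finset V) ⊆ G.neighborFinset v := by
    intro y hy
    simp only [Finset.mem_insert, Finset.mem_singleton] at hy
    rcases hy with rfl | rfl | rfl <;> simpa [SimpleGraph.mem_neighborFinset]
  have hcard : ({a, b, c} : Finset V).card = 3 := by
    rw [Finset.card_insert_of_notMem (by simp [hab, hac]),
      Finset.card_insert_of_notMem (by simp [hbc]), Finset.card_singleton]
  have heq : ({a, b, c} : Finset V) = G.neighborFinset v :=
    Finset.eq_of_subset_of_card_le hsub (by rw [hcard]; exact hdeg)
  have hx' : x ∈ ({a, b, c} : Finset V) := by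
    rw [heq]; simpa [SimpleGraph.mem_neighborFinset]
  simpa using hx'


/-- in a bipartite hourglass of height `h ≥ 5` with both corner
cross edges present (in a graph of maximum degree three), the shifted matching
`M (w i) = u ((i-1) mod h)` is a perfect matching of the hourglass and admits no
exchange-blocking pair within the hourglass under any strict preferences the
agents have over their neighbours. -/
theorem stmt_17 {V : Type*} [Fintype V] (G : SimpleGraph V) [DecidableRel G.Adj]
    (hdeg : ∀ v : V, G.degree v ≤ 3)
    (h : ℕ) (u w : ℕ → V) (hH : IsHourglass G h u w) (hh : 5 ≤ h)
    (hc1 : G.Adj (u 0) (w (h - 1))) (hc2 : G.Adj (u (h - 1)) (w 0))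
    (M : V → V)
    (hMu : ∀ i < h, M (u i) = w ((i + 1) % h))
    (hMw : ∀ i < h, M (w i) = u ((i + (h - 1)) % h)) :
    (∀ i < h, G.Adj (u i) (M (u i)) ∧ G.Adj (w i) (M (w i)) ∧
        M (M (u i)) = u i ∧ M (M (w i)) = w i) ∧
    (∀ pref : V → V → V → Prop,
        (∀ v p q, pref v p q → G.Adj v p ∧ G.Adj v q) →
        (∀ v p, ¬ pref v p p) →
        ¬ ∃ x ∈ hgSet h u w, ∃ y ∈ hgSet h u w,
            x ≠ y ∧ pref x (M y) (M x) ∧ pref y (M x) (M y)) := by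
  
  classical
  obtain ⟨h2, hu, hw, huw, h5, h6, h7⟩ := hH
  have hpos : 0 < h := by omega
  have hSlt : ∀ k : ℕ, (k + 1) % h < h := fun k => Nat.mod_lt _ hpos
  have hPlt : ∀ k : ℕ, (k + (h - 1)) % h < h := fun k => Nat.mod_lt _ hpos
  have hS : ∀ k < h, (k + 1 < h ∧ (k + 1) % h = k + 1) ∨ (k + 1 = h ∧ (k + 1) % h = 0) := by
    intro k hk
    rcases Nat.lt_or_ge (k + 1) h with hlt | hge
    · exact Or.inl ⟨hlt, Nat.mod_eq_of_lt hlt⟩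
    · have he : k + 1 = h := by omega
      exact Or.inr ⟨he, by rw [he, Nat.mod_self]⟩
  have hP : ∀ k < h, (k = 0 ∧ (k + (h - 1)) % h = h - 1) ∨ (1 ≤ k ∧ (k + (h - 1)) % h = k - 1) := by
    intro k hk
    rcases Nat.eq_zero_or_pos k with rfl | hk1
    · exact Or.inl ⟨rfl, by rw [Nat.zero_add, Nat.mod_eq_of_lt (by omega)]⟩
    · refine Or.inr ⟨hk1, ?_⟩
      rw [show k + (h - 1) = h + (k - 1) by omega, Nat.add_mod_left,
        Nat.mod_eq_of_lt (by omega)]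
  have hadjU : ∀ i < h, G.Adj (u i) (w ((i + (h - 1)) % h)) ∧ G.Adj (u i) (w ((i + 1) % h)) := by
    intro i hi
    constructor
    · rcases hP i hi with ⟨he0, he⟩ | ⟨h1, he⟩
      · rw [he, he0]; exact hc1
      · rw [he]
        have := (h6 (i - 1) (by omega)).2
        rwa [show i - 1 + 1 = i by omega] at this
    · rcases hS i hi with ⟨hlt, he⟩ | ⟨he1, he⟩
      · rw [he]; exact (h6 i hlt).1
      · rw [he, show i = h - 1 by omega]; exact hc2
  have hadjW : ∀ i < h, G.Adj (w i) (u ((i + (h - 1)) % h)) ∧ G.Adj (w i) (u ((i + 1) % h)) := by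
    intro i hi
    constructor
    · rcases hP i hi with ⟨he0, he⟩ | ⟨h1, he⟩
      · rw [he, he0]; exact hc2.symm
      · rw [he]
        have := (h6 (i - 1) (by omega)).1
        rw [show i - 1 + 1 = i by omega] at this
        exact this.symm
    · rcases hS i hi with ⟨hlt, he⟩ | ⟨he1, he⟩
      · rw [he]; exact ((h6 i hlt).2).symm
      · rw [he, show i = h - 1 by omega]; exact hc1.symm
  have hdist : ∀ i < h, (i + (h - 1)) % h ≠ i ∧ (i + (h - 1)) % h ≠ (i + 1) % h ∧ i ≠ (i + 1) % h := by
    intro i hi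
    rcases hP i hi with ⟨he0, he⟩ | ⟨h1, he⟩ <;>
      rcases hS i hi with ⟨hl, hs⟩ | ⟨he1, hs⟩ <;>
        (rw [he, hs]; omega)
  have hnbrU : ∀ i < h, ∀ x, G.Adj (u i) x →
      x = w ((i + (h - 1)) % h) ∨ x = w i ∨ x = w ((i + 1) % h) := by
    intro i hi x hx
    have hd := hdist i hi
    refine three_nbrs G (hdeg (u i)) (hadjU i hi).1 (h5 i hi) (hadjU i hi).2 ?_ ?_ ?_ hx
    · exact fun he => hd.1 (hw (hPlt i) hi he)
    · exact fun he => hd.2.1 (hw (hPlt i) (hSlt i) he)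
    · exact fun he => hd.2.2 (hw hi (hSlt i) he)
  have hnbrW : ∀ i < h, ∀ x, G.Adj (w i) x →
      x = u ((i + (h - 1)) % h) ∨ x = u i ∨ x = u ((i + 1) % h) := by
    intro i hi x hx
    have hd := hdist i hi
    refine three_nbrs G (hdeg (w i)) (hadjW i hi).1 (h5 i hi).symm (hadjW i hi).2 ?_ ?_ ?_ hx
    · exact fun he => hd.1 (hu (hPlt i) hi he)
    · exact fun he => hd.2.1 (hu (hPlt i) (hSlt i) he)
    · exact fun he => hd.2.2 (hu hi (hSlt i) he)
  have keyPS : ∀ i < h, ((i + 1) % h + (h - 1)) % h = i := by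
    intro i hi
    rcases hS i hi with ⟨hl, hs⟩ | ⟨he1, hs⟩
    · rw [hs, show i + 1 + (h - 1) = h + i by omega, Nat.add_mod_left, Nat.mod_eq_of_lt hi]
    · rw [hs, Nat.zero_add, Nat.mod_eq_of_lt (by omega)]; omega
  have keySP : ∀ i < h, ((i + (h - 1)) % h + 1) % h = i := by
    intro i hi
    rcases hP i hi with ⟨he0, hp⟩ | ⟨h1, hp⟩
    · rw [hp, show h - 1 + 1 = h by omega, Nat.mod_self, he0]
    · rw [hp, show i - 1 + 1 = i by omega, Nat.mod_eq_of_lt hi]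
  constructor
  · intro i hi
    refine ⟨?_, ?_, ?_, ?_⟩
    · rw [hMu i hi]; exact (hadjU i hi).2
    · rw [hMw i hi]; exact (hadjW i hi).1
    · rw [hMu i hi, hMw _ (hSlt i), keyPS i hi]
    · rw [hMw i hi, hMu _ (hPlt i), keySP i hi]
  · rintro pref hprefAdj hirr ⟨x, hx, y, hy, hxy, hpx, hpy⟩
    obtain ⟨i, hi, hxui⟩ := hx
    obtain ⟨j, hj, hyuj⟩ := hy
    have haxMy : G.Adj x (M y) := (hprefAdj x _ _ hpx).1
    have hayMx : G.Adj y (M x) := (hprefAdj y _ _ hpy).1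
    have hMne : M y ≠ M x := fun he => hirr x (M x) (he ▸ hpx)
    rcases hxui with rfl | rfl <;> rcases hyuj with rfl | rfl
    · -- x = u i, y = u j
      rw [hMu j hj] at haxMy hMne
      rw [hMu i hi] at hayMx hMne
      have e1 := hnbrU i hi _ haxMy
      have e2 := hnbrU j hj _ hayMx
      have e1' : (j + 1) % h = (i + (h - 1)) % h ∨ (j + 1) % h = i ∨ (j + 1) % h = (i + 1) % h := by
        rcases e1 with he | he | he
        · exact Or.inl (hw (hSlt j) (hPlt i) he)
        · exact Or.inr (Or.inl (hw (hSlt j) hi he))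
        · exact Or.inr (Or.inr (hw (hSlt j) (hSlt i) he))
      have e2' : (i + 1) % h = (j + (h - 1)) % h ∨ (i + 1) % h = j ∨ (i + 1) % h = (j + 1) % h := by
        rcases e2 with he | he | he
        · exact Or.inl (hw (hSlt i) (hPlt j) he)
        · exact Or.inr (Or.inl (hw (hSlt i) hj he))
        · exact Or.inr (Or.inr (hw (hSlt i) (hSlt j) he))
      have hne' : (j + 1) % h ≠ (i + 1) % h := fun he => hMne (congrArg w he)
      obtain ⟨si, hsi, hsid⟩ : ∃ s, (i + 1) % h = s ∧
          ((i + 1 < h ∧ s = i + 1) ∨ (i + 1 = h ∧ s = 0)) := by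
        rcases hS i hi with ⟨a, b⟩ | ⟨a, b⟩
        exacts [⟨_, rfl, Or.inl ⟨a, b⟩⟩, ⟨_, rfl, Or.inr ⟨a, b⟩⟩]
      obtain ⟨sj, hsj, hsjd⟩ : ∃ s, (j + 1) % h = s ∧
          ((j + 1 < h ∧ s = j + 1) ∨ (j + 1 = h ∧ s = 0)) := by
        rcases hS j hj with ⟨a, b⟩ | ⟨a, b⟩
        exacts [⟨_, rfl, Or.inl ⟨a, b⟩⟩, ⟨_, rfl, Or.inr ⟨a, b⟩⟩]
      obtain ⟨pi, hpi, hpid⟩ : ∃ p, (i + (h - 1)) % h = p ∧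
          ((i = 0 ∧ p = h - 1) ∨ (1 ≤ i ∧ p = i - 1)) := by
        rcases hP i hi with ⟨a, b⟩ | ⟨a, b⟩
        exacts [⟨_, rfl, Or.inl ⟨a, b⟩⟩, ⟨_, rfl, Or.inr ⟨a, b⟩⟩]
      obtain ⟨pj, hpj, hpjd⟩ : ∃ p, (j + (h - 1)) % h = p ∧
          ((j = 0 ∧ p = h - 1) ∨ (1 ≤ j ∧ p = j - 1)) := by
        rcases hP j hj with ⟨a, b⟩ | ⟨a, b⟩
        exacts [⟨_, rfl, Or.inl ⟨a, b⟩⟩, ⟨_, rfl, Or.inr ⟨a, b⟩⟩]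
      simp only [hsi, hsj, hpi, hpj] at e1' e2' hne'
      omega
    · -- x = u i, y = w j
      rw [hMw j hj] at haxMy
      rcases hnbrU i hi _ haxMy with he | he | he
      · exact huw _ (hPlt j) _ (hPlt i) he
      · exact huw _ (hPlt j) _ hi he
      · exact huw _ (hPlt j) _ (hSlt i) he
    · -- x = w i, y = u j
      rw [hMu j hj] at haxMy
      rcases hnbrW i hi _ haxMy with he | he | he
      · exact huw _ (hPlt i) _ (hSlt j) he.symm
      · exact huw _ hi _ (hSlt j) he.symm
      · exact huw _ (hSlt i) _ (hSlt j) he.symm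
    · -- x = w i, y = w j
      rw [hMw j hj] at haxMy hMne
      rw [hMw i hi] at hayMx hMne
      have e1 := hnbrW i hi _ haxMy
      have e2 := hnbrW j hj _ hayMx
      have e1' : (j + (h - 1)) % h = (i + (h - 1)) % h ∨ (j + (h - 1)) % h = i ∨
          (j + (h - 1)) % h = (i + 1) % h := by
        rcases e1 with he | he | he
        · exact Or.inl (hu (hPlt j) (hPlt i) he)
        · exact Or.inr (Or.inl (hu (hPlt j) hi he))
        · exact Or.inr (Or.inr (hu (hPlt j) (hSlt i) he))
      have e2' : (i + (h - 1)) % h = (j + (h - 1)) % h ∨ (i + (h - 1)) % h = j ∨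
          (i + (h - 1)) % h = (j + 1) % h := by
        rcases e2 with he | he | he
        · exact Or.inl (hu (hPlt i) (hPlt j) he)
        · exact Or.inr (Or.inl (hu (hPlt i) hj he))
        · exact Or.inr (Or.inr (hu (hPlt i) (hSlt j) he))
      have hne' : (j + (h - 1)) % h ≠ (i + (h - 1)) % h := fun he => hMne (congrArg u he)
      obtain ⟨si, hsi, hsid⟩ : ∃ s, (i + 1) % h = s ∧
          ((i + 1 < h ∧ s = i + 1) ∨ (i + 1 = h ∧ s = 0)) := by
        rcases hS i hi with ⟨a, b⟩ | ⟨a, b⟩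
        exacts [⟨_, rfl, Or.inl ⟨a, b⟩⟩, ⟨_, rfl, Or.inr ⟨a, b⟩⟩]
      obtain ⟨sj, hsj, hsjd⟩ : ∃ s, (j + 1) % h = s ∧
          ((j + 1 < h ∧ s = j + 1) ∨ (j + 1 = h ∧ s = 0)) := by
        rcases hS j hj with ⟨a, b⟩ | ⟨a, b⟩
        exacts [⟨_, rfl, Or.inl ⟨a, b⟩⟩, ⟨_, rfl, Or.inr ⟨a, b⟩⟩]
      obtain ⟨pi, hpi, hpid⟩ : ∃ p, (i + (h - 1)) % h = p ∧
          ((i = 0 ∧ p = h - 1) ∨ (1 ≤ i ∧ p = i - 1)) := by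
        rcases hP i hi with ⟨a, b⟩ | ⟨a, b⟩
        exacts [⟨_, rfl, Or.inl ⟨a, b⟩⟩, ⟨_, rfl, Or.inr ⟨a, b⟩⟩]
      obtain ⟨pj, hpj, hpjd⟩ : ∃ p, (j + (h - 1)) % h = p ∧
          ((j = 0 ∧ p = h - 1) ∨ (1 ≤ j ∧ p = j - 1)) := by
        rcases hP j hj with ⟨a, b⟩ | ⟨a, b⟩
        exacts [⟨_, rfl, Or.inl ⟨a, b⟩⟩, ⟨_, rfl, Or.inr ⟨a, b⟩⟩]
      simp only [hsi, hsj, hpi, hpj] at e1' e2' hne'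
      omega
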